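/- arXiv:1702.02325 — 3 statements merged into one kernel-verified Lean document; each statement's English description precedes it below -/
import Mathlib

section
/- Take $d \ge 2$ an integer, $0 < \delta < 2^{-d-1}$, and finite sets $X_1, \dots, X_d$ each of cardinality at least $n > 1$. Suppose $Y \subseteq X_1 \times \cdots \times X_d$ has cardinality at least $\delta \cdot |X_1 \times \cdots \times X_d|$. Then for any positive integer $r$ with $r \le \left(\frac{\log n}{5 \log \delta^{-1}}\right)^{1/(d-1)}$, there exist subsets $Z_1 \subseteq X_1, \dots, Z_d \subseteq X_d$, each of cardinality $r$, such that $Z_1 \times \cdots \times Z_d \subseteq Y$. -/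
set_option maxRecDepth 40000
set_option maxHeartbeats 2000000

open Finset

universe u

theorem grid_aux : ∀ (k : ℕ) (ι : Type) [Fintype ι] [DecidableEq ι]
    (X : ι → Type u) [∀ i, Fintype (X i)],
    Fintype.card ι = k + 1 → ∀ (n r : ℕ) (δ : ℝ), 2 ≤ r → 0 < δ → δ ≤ 1 →
    (∀ i, n ≤ Fintype.card (X i)) → ∀ Y : Finset (∀ i, X i),
    δ * Fintype.card (∀ i, X i) ≤ Y.card →
    2 * (r : ℝ) ^ 2 ≤ (δ / 2) ^ (r ^ k) * n →
    ∃ Z : ∀ i, Finset (X i), (∀ i, (Z i).card = r) ∧ ∀ f, (∀ i, f i ∈ Z i) → f ∈ Y := by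
  intro k
  induction k with
  | zero =>
    intro ι _ _ X _ hcard n r δ hr2 hδ0 hδ1 hX Y hY Hn
    classical
    obtain ⟨i0, hi0⟩ := Fintype.card_eq_one_iff.mp hcard
    -- any two functions agreeing at some point are equal
    have hsub : ∀ (f g : ∀ i, X i) (i : ι), f i = g i → f = g := by
      intro f g i hfg
      funext j
      have : j = i := by rw [hi0 j, hi0 i]
      subst this; exact hfg
    have huniv : (univ : Finset ι) = {i0} := by
      ext j; simp [hi0 j]
    have hcardpi : (n : ℝ) ≤ Fintype.card (∀ i, X i) := by
      rw [Fintype.card_pi, huniv, Finset.prod_singleton]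
      exact_mod_cast hX i0
    have hrpos : (0:ℝ) < r := by exact_mod_cast (by omega : 0 < r)
    have hr2' : (2:ℝ) ≤ r := by exact_mod_cast hr2
    have hn0 : 0 < n := by
      by_contra h
      push_neg at h
      interval_cases n
      simp at Hn
      linarith [pow_pos hrpos 2]
    have hrY : r ≤ Y.card := by
      have h1 : (r : ℝ) ≤ δ / 2 * n := by
        have : (r : ℝ) ≤ 2 * (r:ℝ)^2 := by
          nlinarith [mul_le_mul_of_nonneg_left hr2' (by linarith : (0:ℝ) ≤ r), sq_nonneg (r:ℝ)]
        calc (r:ℝ) ≤ 2 * (r:ℝ)^2 := this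
          _ ≤ (δ/2) ^ (r ^ 0) * n := Hn
          _ = δ / 2 * n := by norm_num
      have h2 : (r : ℝ) ≤ Y.card := by
        calc (r:ℝ) ≤ δ/2 * n := h1
          _ ≤ δ * Fintype.card (∀ i, X i) := by
            have : δ/2 * n ≤ δ * n := by nlinarith
            refine this.trans ?_
            have := mul_le_mul_of_nonneg_left hcardpi hδ0.le
            linarith
          _ ≤ Y.card := hY
      exact_mod_cast h2
    obtain ⟨T, hTsub, hTcard⟩ := Finset.exists_subset_card_eq hrY
    refine ⟨fun i => T.image (fun f => f i), fun i => ?_, fun f hf => ?_⟩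
    · rw [Finset.card_image_of_injOn, hTcard]
      intro f hfT g hgT hfg
      exact hsub f g i hfg
    · have := hf i0
      simp only [Finset.mem_image] at this
      obtain ⟨g, hgT, hg⟩ := this
      have : f = g := hsub f g i0 hg.symm
      exact this ▸ hTsub hgT
  | succ k ih =>
    intro ι _ _ X _ hcard n r δ hr2 hδ0 hδ1 hX Y hY Hn
    classical
    have hrpos : (0:ℝ) < r := by exact_mod_cast (by omega : 0 < r)
    have hr2' : (2:ℝ) ≤ r := by exact_mod_cast hr2
    have hn0 : 0 < n := by
      by_contra h
      push_neg at h
      interval_cases n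
      simp at Hn
      linarith [pow_pos hrpos 2]
    haveI hXne : ∀ i, Nonempty (X i) := fun i =>
      Fintype.card_pos_iff.mp (lt_of_lt_of_le hn0 (hX i))
    have : 0 < Fintype.card ι := by rw [hcard]; omega
    obtain ⟨i0⟩ := Fintype.card_pos_iff.mp this
    set A := X i0 with hA
    set B := ∀ j : {j : ι // j ≠ i0}, X j.1 with hB
    set e := Equiv.piSplitAt i0 X with he
    set Y' : Finset (A × B) := Y.image e with hY'
    have hY'card : Y'.card = Y.card := Finset.card_image_of_injective _ e.injective
    set m := Fintype.card A with hm
    set M := Fintype.card B with hM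
    have hmn : n ≤ m := hX i0
    have hm0 : 0 < m := lt_of_lt_of_le hn0 hmn
    have hM0 : 0 < M := Fintype.card_pos
    have hcardprod : Fintype.card (∀ i, X i) = m * M := by
      rw [Fintype.card_congr e, Fintype.card_prod]
    -- degree function
    set deg : B → ℕ := fun b => (univ.filter fun a : A => (a, b) ∈ Y').card with hdeg
    have hdegsum : ∑ b, deg b = Y.card := by
      rw [← hY'card, ← Finset.filter_univ_mem Y', Finset.card_filter, Fintype.sum_prod_type,
        Finset.sum_comm]
      refine Finset.sum_congr rfl fun b _ => ?_
      show (univ.filter fun a : A => (a, b) ∈ Y').card = _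
      rw [Finset.card_filter]
    -- common neighborhoods
    set S : (Fin r → A) → Finset B := fun w => univ.filter fun b : B => ∀ j, (w j, b) ∈ Y'
      with hS
    have hkey : ∑ w : Fin r → A, (S w).card = ∑ b, (deg b) ^ r := by
      have h1 : ∀ w : Fin r → A, (S w).card = ∑ b, if (∀ j, (w j, b) ∈ Y') then 1 else 0 := by
        intro w
        show (univ.filter fun b : B => ∀ j, (w j, b) ∈ Y').card = _
        rw [Finset.card_filter]
      have h2 : ∀ b : B, (∑ w : Fin r → A, if (∀ j, (w j, b) ∈ Y') then 1 else 0) = (deg b) ^ r := by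
        intro b
        calc (∑ w : Fin r → A, if (∀ j, (w j, b) ∈ Y') then 1 else 0)
            = (univ.filter fun w : Fin r → A => ∀ j, (w j, b) ∈ Y').card := by
              rw [Finset.card_filter]
          _ = Fintype.card {w : Fin r → A // ∀ j, (w j, b) ∈ Y'} :=
              (Fintype.card_subtype _).symm
          _ = Fintype.card (Fin r → {a : A // (a, b) ∈ Y'}) :=
              Fintype.card_congr (Equiv.subtypePiEquivPi (β := fun _ : Fin r => A) (p := fun _ a => (a, b) ∈ Y'))
          _ = Fintype.card {a : A // (a, b) ∈ Y'} ^ r := by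
              rw [Fintype.card_fun, Fintype.card_fin]
          _ = (deg b) ^ r := by
              rw [Fintype.card_subtype, hdeg]
      calc ∑ w : Fin r → A, (S w).card
          = ∑ w : Fin r → A, ∑ b, if (∀ j, (w j, b) ∈ Y') then 1 else 0 :=
            Finset.sum_congr rfl fun w _ => h1 w
        _ = ∑ b, ∑ w : Fin r → A, if (∀ j, (w j, b) ∈ Y') then 1 else 0 := Finset.sum_comm
        _ = ∑ b, (deg b) ^ r := Finset.sum_congr rfl fun b _ => h2 b
    -- Jensen's inequality
    have hMpos' : (0:ℝ) < M := by exact_mod_cast hM0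
    have hmpos' : (0:ℝ) < m := by exact_mod_cast hm0
    have hnpos' : (0:ℝ) < n := by exact_mod_cast hn0
    have hmn' : (n:ℝ) ≤ m := by exact_mod_cast hmn
    have hsumreal : ((Y.card : ℝ)) ^ r / (M:ℝ) ^ (r-1) ≤ ∑ b, (deg b : ℝ) ^ r := by
      have h := pow_sum_div_card_le_sum_pow (s := (univ : Finset B))
        (f := fun b => (deg b : ℝ)) (fun b _ => Nat.cast_nonneg _) (r - 1)
      have hr1 : r - 1 + 1 = r := by omega
      rw [hr1] at h
      have hcast : (∑ b, (deg b : ℝ)) = (Y.card : ℝ) := by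
        rw [← hdegsum]; push_cast; rfl
      rwa [hcast, Finset.card_univ] at h
    have hYlb : δ * m * M ≤ (Y.card : ℝ) := by
      have hc : ((Fintype.card (∀ i, X i) : ℕ) : ℝ) = (m:ℝ) * M := by
        rw [hcardprod]; push_cast; ring
      calc δ * m * M = δ * ((m:ℝ) * M) := by ring
        _ = δ * (Fintype.card (∀ i, X i) : ℕ) := by rw [hc]
        _ ≤ Y.card := hY
    have hjensen : δ^r * (m:ℝ)^r * M ≤ ∑ b, (deg b:ℝ)^r := by
      refine le_trans ?_ hsumreal
      rw [le_div_iff₀ (by positivity)]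
      have h1 : δ^r * (m:ℝ)^r * (M:ℝ) * (M:ℝ)^(r-1) = (δ * m * M)^r := by
        rw [mul_pow, mul_pow]
        have h2 : (M:ℝ)^r = (M:ℝ)^(r-1) * M := by
          rw [← pow_succ]
          congr 1
          omega
        rw [h2]; ring
      rw [h1]
      exact pow_le_pow_left₀ (by positivity) hYlb r
    -- counting non-injective tuples
    set NI := (univ : Finset (Fin r → A)).filter (fun w => ¬ Function.Injective w) with hNIdef
    have hNIcard : NI.card ≤ r^2 * m^(r-1) := by
      have hsub2 : NI ⊆ ((univ : Finset (Fin r × Fin r)).filter fun p => p.1 ≠ p.2).biUnion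
          (fun p => univ.filter fun w : Fin r → A => w p.1 = w p.2) := by
        intro w hw
        simp only [hNIdef, Finset.mem_filter, Finset.mem_univ, true_and] at hw
        rw [Function.Injective] at hw
        push_neg at hw
        obtain ⟨a, b, hab, hne⟩ := hw
        refine Finset.mem_biUnion.mpr ⟨(a, b), ?_, ?_⟩ <;>
          simp [hne, hab]
      refine le_trans (Finset.card_le_card hsub2) ?_
      refine le_trans (Finset.card_biUnion_le) ?_
      have hone : ∀ p : Fin r × Fin r, p ∈ ((univ : Finset (Fin r × Fin r)).filter
          fun p => p.1 ≠ p.2) →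
          (univ.filter fun w : Fin r → A => w p.1 = w p.2).card ≤ m^(r-1) := by
        intro p hp
        have hp' : p.1 ≠ p.2 := (Finset.mem_filter.mp hp).2
        have hle : (univ.filter fun w : Fin r → A => w p.1 = w p.2).card ≤
            Fintype.card ({t : Fin r // t ≠ p.2} → A) := by
          apply Finset.card_le_card_of_injOn (fun w => fun t => w t.1)
            (fun w _ => Finset.mem_univ _)
          intro w hw w' hw' hww
          simp only [Finset.coe_filter, Set.mem_setOf_eq, Finset.mem_univ, true_and] at hw hw'
          funext t
          by_cases ht : t = p.2
          · subst ht
            have h1 : w p.1 = w' p.1 := congrFun hww ⟨p.1, hp'⟩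
            rw [← hw, ← hw']
            exact h1
          · exact congrFun hww ⟨t, ht⟩
        refine hle.trans ?_
        rw [Fintype.card_fun]
        have hcs : Fintype.card {t : Fin r // t ≠ p.2} = r - 1 := by
          have h1 := Fintype.card_subtype_compl (fun t : Fin r => t = p.2)
          rw [Fintype.card_subtype_eq, Fintype.card_fin] at h1
          exact h1
        rw [hcs]
      refine le_trans (Finset.sum_le_card_nsmul _ _ (m^(r-1)) hone) ?_
      simp only [smul_eq_mul]
      have hps : ((univ : Finset (Fin r × Fin r)).filter fun p => p.1 ≠ p.2).card ≤ r^2 := by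
        refine le_trans (Finset.card_filter_le _ _) ?_
        rw [Finset.card_univ, Fintype.card_prod, Fintype.card_fin]
        nlinarith []
      exact Nat.mul_le_mul_right _ hps
    -- the new density
    set δ' : ℝ := δ^r - (r:ℝ)^2 / n with hδ'def
    have hrn : (r:ℝ)^2 / n ≤ (δ/2)^(r^(k+1)) / 2 := by
      rw [div_le_div_iff₀ hnpos' two_pos]
      linarith [Hn]
    have hppow : ((δ:ℝ)/2)^(r^(k+1)) ≤ (δ/2)^r := by
      apply pow_le_pow_of_le_one (by positivity) (by linarith)
      calc r = r^1 := (pow_one r).symm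
        _ ≤ r^(k+1) := Nat.pow_le_pow_right (by omega) (by omega)
    have h2r : (5/2 : ℝ) * (δ/2)^r ≤ δ^r := by
      have h4 : (4:ℝ) ≤ 2^r := by
        calc (4:ℝ) = 2^2 := by norm_num
          _ ≤ 2^r := pow_le_pow_right₀ one_le_two hr2
      have hδr : (0:ℝ) < δ^r := by positivity
      have hdp : ((δ:ℝ)/2)^r = δ^r / 2^r := div_pow δ 2 r
      rw [hdp, mul_comm, div_mul_eq_mul_div, div_le_iff₀ (by positivity : (0:ℝ) < 2^r)]
      have := mul_le_mul_of_nonneg_left h4 hδr.le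
      linarith [this, hδr]
    have hδ'lb : 2 * (δ/2)^r ≤ δ' := by
      have hh : (r:ℝ)^2/n ≤ (δ/2)^r / 2 := le_trans hrn (by linarith)
      rw [hδ'def]
      linarith
    have hδ'0 : 0 < δ' := lt_of_lt_of_le (by positivity) hδ'lb
    have hδ'1 : δ' ≤ 1 := by
      have h1 : δ^r ≤ 1 := pow_le_one₀ hδ0.le hδ1
      have h2 : (0:ℝ) ≤ (r:ℝ)^2/n := by positivity
      rw [hδ'def]
      linarith
    -- sum over injective tuples
    set Inj := (univ : Finset (Fin r → A)).filter (fun w => Function.Injective w) with hInjdef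
    have htot : ∑ w ∈ Inj, ((S w).card:ℝ) + ∑ w ∈ NI, ((S w).card:ℝ)
        = ∑ w : Fin r → A, ((S w).card:ℝ) :=
      Finset.sum_filter_add_sum_filter_not _ _ _
    have htot2 : (∑ w : Fin r → A, ((S w).card:ℝ)) = ∑ b, ((deg b:ℝ))^r := by
      rw [← Nat.cast_sum, hkey]; push_cast; rfl
    have hNIsum : ∑ w ∈ NI, ((S w).card:ℝ) ≤ (r:ℝ)^2 * (m:ℝ)^(r-1) * M := by
      refine le_trans (Finset.sum_le_card_nsmul _ _ (M:ℝ) fun w _ => ?_) ?_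
      · exact_mod_cast Finset.card_le_univ (S w)
      · simp only [nsmul_eq_mul]
        have h1 : (NI.card : ℝ) ≤ (r:ℝ)^2 * (m:ℝ)^(r-1) := by exact_mod_cast hNIcard
        exact mul_le_mul_of_nonneg_right h1 hMpos'.le
    have hNI2 : (r:ℝ)^2 * (m:ℝ)^(r-1) * M ≤ (r:ℝ)^2/n * ((m:ℝ)^r * M) := by
      have hmr : (m:ℝ)^(r-1) * n ≤ (m:ℝ)^r := by
        have h1 : (m:ℝ)^r = (m:ℝ)^(r-1) * m := by
          rw [← pow_succ]; congr 1; omega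
        rw [h1]
        exact mul_le_mul_of_nonneg_left hmn' (by positivity)
      have h2 : (m:ℝ)^(r-1) * M * n ≤ (m:ℝ)^r * M := by
        calc (m:ℝ)^(r-1) * M * n = ((m:ℝ)^(r-1) * n) * M := by ring
          _ ≤ (m:ℝ)^r * M := mul_le_mul_of_nonneg_right hmr hMpos'.le
      rw [div_mul_eq_mul_div, le_div_iff₀ hnpos']
      calc (r:ℝ)^2 * (m:ℝ)^(r-1) * M * n = (r:ℝ)^2 * ((m:ℝ)^(r-1) * M * n) := by ring
        _ ≤ (r:ℝ)^2 * ((m:ℝ)^r * M) := mul_le_mul_of_nonneg_left h2 (by positivity)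
    have hsplit : δ' * ((m:ℝ)^r * M) ≤ ∑ w ∈ Inj, ((S w).card:ℝ) := by
      have hexp : δ' * ((m:ℝ)^r * M) = δ^r * (m:ℝ)^r * M - (r:ℝ)^2/n * ((m:ℝ)^r * M) := by
        rw [hδ'def]; ring
      calc δ' * ((m:ℝ)^r * M)
          = δ^r * (m:ℝ)^r * M - (r:ℝ)^2/n * ((m:ℝ)^r * M) := hexp
        _ ≤ (∑ b, ((deg b:ℝ))^r) - ∑ w ∈ NI, ((S w).card:ℝ) :=
            sub_le_sub hjensen (hNIsum.trans hNI2)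
        _ = ∑ w ∈ Inj, ((S w).card:ℝ) := by rw [← htot2, ← htot]; ring
    have hInjne : Inj.Nonempty := by
      rw [Finset.nonempty_iff_ne_empty]
      intro h
      rw [h, Finset.sum_empty] at hsplit
      have hpos : 0 < δ' * ((m:ℝ)^r * M) :=
        mul_pos hδ'0 (mul_pos (pow_pos hmpos' r) hMpos')
      linarith
    have hInjcard : (Inj.card : ℝ) ≤ (m:ℝ)^r := by
      have h1 : Inj.card ≤ m^r := by
        refine le_trans (Finset.card_le_univ _) ?_
        rw [Fintype.card_fun, Fintype.card_fin]
      exact_mod_cast h1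
    obtain ⟨w, hwmem, hw⟩ := Finset.exists_le_of_sum_le (f := fun _ => δ' * M)
      (g := fun w => ((S w).card : ℝ)) hInjne (by
        rw [Finset.sum_const, nsmul_eq_mul]
        refine le_trans ?_ hsplit
        have h1 : (0:ℝ) ≤ δ' * M := mul_nonneg hδ'0.le hMpos'.le
        calc (Inj.card : ℝ) * (δ' * M) ≤ (m:ℝ)^r * (δ' * M) :=
              mul_le_mul_of_nonneg_right hInjcard h1
          _ = δ' * ((m:ℝ)^r * M) := by ring)
    have hwInj : Function.Injective w := (Finset.mem_filter.mp hwmem).2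
    -- apply the induction hypothesis
    have hcard' : Fintype.card {j : ι // j ≠ i0} = k + 1 := by
      have h1 := Fintype.card_subtype_compl (fun j : ι => j = i0)
      rw [Fintype.card_subtype_eq, hcard] at h1
      simpa using h1
    have hYw : δ' * (Fintype.card B : ℝ) ≤ ((S w).card : ℝ) := hw
    have hHn' : 2 * (r:ℝ)^2 ≤ (δ'/2)^(r^k) * n := by
      have hb : ((δ:ℝ)/2)^r ≤ δ'/2 := by linarith only [hδ'lb]
      have hpe : ((δ:ℝ)/2)^(r^(k+1)) = (((δ:ℝ)/2)^r)^(r^k) := by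
        rw [← pow_mul]
        congr 1
        ring
      calc 2*(r:ℝ)^2 ≤ (δ/2)^(r^(k+1)) * n := Hn
        _ = (((δ:ℝ)/2)^r)^(r^k) * n := by rw [hpe]
        _ ≤ (δ'/2)^(r^k) * n := by
            refine mul_le_mul_of_nonneg_right ?_ (by positivity)
            exact pow_le_pow_left₀ (by positivity) hb _
    obtain ⟨Z', hZ'card, hZ'mem⟩ := ih {j : ι // j ≠ i0} (fun j => X j.1) hcard' n r δ'
      hr2 hδ'0 hδ'1 (fun j => hX j.1) (S w) hYw hHn'
    -- assemble the answer
    set W : Finset A := Finset.image w univ with hWdef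
    have hWcard : W.card = r := by
      rw [hWdef, Finset.card_image_of_injective _ hwInj, Finset.card_univ, Fintype.card_fin]
    refine ⟨fun i => if h : i = i0 then cast (by rw [h]) W else Z' ⟨i, h⟩, fun i => ?_,
      fun f hf => ?_⟩
    · by_cases h : i = i0
      · subst h
        simp only [dif_pos]
        exact hWcard
      · simp only [dif_neg h]
        exact hZ'card ⟨i, h⟩
    · have hfi0 : f i0 ∈ W := by
        have h0 := hf i0
        simp only [dif_pos, cast_eq] at h0
        exact h0
      rw [hWdef] at hfi0
      obtain ⟨j, _, hj⟩ := Finset.mem_image.mp hfi0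
      have hgmem : ∀ j' : {j : ι // j ≠ i0}, (fun j' : {j : ι // j ≠ i0} => f j'.1) j' ∈ Z' j' := by
        intro j'
        have h1 := hf j'.1
        simpa only [dif_neg j'.2] using h1
      have hgS : (fun j' : {j : ι // j ≠ i0} => f j'.1) ∈ S w := hZ'mem _ hgmem
      have hgS' : ∀ jj : Fin r, (w jj, fun j' : {j : ι // j ≠ i0} => f j'.1) ∈ Y' := by
        have h1 : (fun j' : {j : ι // j ≠ i0} => f j'.1) ∈
            univ.filter fun b : B => ∀ jj, (w jj, b) ∈ Y' := hgS
        exact (Finset.mem_filter.mp h1).2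
      have hj' : ((f i0 : A), fun j' : {j : ι // j ≠ i0} => f j'.1) ∈ Y' := by
        rw [← hj]; exact hgS' j
      rw [hY'] at hj'
      obtain ⟨F, hFY, hFe⟩ := Finset.mem_image.mp hj'
      have hFf : F = f := by
        rw [he, Equiv.piSplitAt_apply] at hFe
        have h1 : F i0 = f i0 := congrArg Prod.fst hFe
        have h2 := congrArg Prod.snd hFe
        funext i
        by_cases hi : i = i0
        · subst hi
          exact h1
        · exact congrFun h2 ⟨i, hi⟩
      rwa [hFf] at hFY

theorem stmt3 {d n r : ℕ} (hd : 2 ≤ d) {δ : ℝ} (hδ0 : 0 < δ) (hδ1 : δ < 2 ^ (-(d : ℝ) - 1))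
    (hn : 1 < n) (X : Fin d → Type*) [∀ i, Fintype (X i)] (hX : ∀ i, n ≤ Fintype.card (X i))
    (Y : Finset (∀ i, X i))
    (hY : δ * Fintype.card (∀ i, X i) ≤ Y.card)
    (hr : 0 < r) (hrle : (r : ℝ) ≤ (Real.log n / (5 * Real.log δ⁻¹)) ^ ((1 : ℝ) / ((d : ℝ) - 1))) :
    ∃ Z : ∀ i, Finset (X i), (∀ i, (Z i).card = r) ∧
      ∀ f : ∀ i, X i, (∀ i, f i ∈ Z i) → f ∈ Y := by
  classical
  have hn0 : 0 < n := by omega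
  have hδlt1 : δ < 1 := by
    refine lt_of_lt_of_le hδ1 ?_
    refine Real.rpow_le_one_of_one_le_of_nonpos one_le_two ?_
    have : (0:ℝ) ≤ (d:ℝ) := Nat.cast_nonneg d
    linarith
  haveI hXne : ∀ i, Nonempty (X i) := fun i =>
    Fintype.card_pos_iff.mp (lt_of_lt_of_le hn0 (hX i))
  rcases eq_or_lt_of_le (Nat.succ_le_of_lt hr) with h1 | h2
  · -- r = 1
    have hYne : Y.Nonempty := by
      rw [← Finset.card_pos]
      have hcp : (0:ℝ) < Fintype.card (∀ i, X i) := by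
        exact_mod_cast Fintype.card_pos
      have : (0:ℝ) < Y.card := lt_of_lt_of_le (mul_pos hδ0 hcp) hY
      exact_mod_cast this
    obtain ⟨f, hf⟩ := hYne
    refine ⟨fun i => {f i}, fun i => by rw [Finset.card_singleton]; exact h1, fun g hg => ?_⟩
    have : g = f := funext fun i => Finset.mem_singleton.mp (hg i)
    rwa [this]
  · -- 2 ≤ r
    have hr2 : 2 ≤ r := h2
    have hlogn : 0 < Real.log n := Real.log_pos (by exact_mod_cast hn)
    have hlog2 : (0.6931471803 : ℝ) < Real.log 2 := Real.log_two_gt_d9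
    have hlogδ : Real.log δ < (-(d:ℝ) - 1) * Real.log 2 := by
      have h := Real.log_lt_log hδ0 hδ1
      rwa [Real.log_rpow two_pos] at h
    have hLinv : Real.log δ⁻¹ = - Real.log δ := Real.log_inv δ
    have hd3 : (3:ℝ) ≤ (d:ℝ) + 1 := by
      have : (2:ℝ) ≤ (d:ℝ) := by exact_mod_cast hd
      linarith
    have hL3 : 3 * Real.log 2 ≤ Real.log δ⁻¹ := by
      have h1 : ((d:ℝ) + 1) * Real.log 2 < Real.log δ⁻¹ := by
        rw [hLinv]; nlinarith
      nlinarith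
    have hL2 : (2:ℝ) ≤ Real.log δ⁻¹ := by nlinarith
    have hL0 : (0:ℝ) < Real.log δ⁻¹ := by linarith
    -- from the hypothesis on r
    have hdm1 : (0:ℝ) < (d:ℝ) - 1 := by
      have : (2:ℝ) ≤ (d:ℝ) := by exact_mod_cast hd
      linarith
    have hT0 : (0:ℝ) < Real.log n / (5 * Real.log δ⁻¹) := by positivity
    have hcastd : ((d - 1 : ℕ):ℝ) = (d:ℝ) - 1 := by
      rw [Nat.cast_sub (by omega)]; norm_num
    have hRT : (r:ℝ) ^ (d - 1 : ℕ) ≤ Real.log n / (5 * Real.log δ⁻¹) := by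
      have h := Real.rpow_le_rpow (by positivity) hrle (le_of_lt hdm1)
      rw [← Real.rpow_natCast (r:ℝ) (d-1), hcastd]
      calc (r:ℝ) ^ ((d:ℝ) - 1)
          ≤ ((Real.log n / (5 * Real.log δ⁻¹)) ^ ((1:ℝ)/((d:ℝ)-1))) ^ ((d:ℝ)-1) := h
        _ = Real.log n / (5 * Real.log δ⁻¹) := by
            rw [← Real.rpow_mul hT0.le, one_div, inv_mul_cancel₀ (ne_of_gt hdm1),
              Real.rpow_one]
    have hfive : (r:ℝ) ^ (d - 1 : ℕ) * (5 * Real.log δ⁻¹) ≤ Real.log n :=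
      (le_div_iff₀ (by positivity)).mp hRT
    -- deduce the hypothesis of grid_aux
    have hrpos : (0:ℝ) < r := by exact_mod_cast hr
    have hr2' : (2:ℝ) ≤ r := by exact_mod_cast hr2
    have hrR : (r:ℝ) ≤ (r:ℝ) ^ (d - 1 : ℕ) := by
      calc (r:ℝ) = (r:ℝ) ^ 1 := (pow_one _).symm
        _ ≤ (r:ℝ) ^ (d - 1 : ℕ) := pow_le_pow_right₀ (by linarith) (by omega)
    have hR1 : (1:ℝ) ≤ (r:ℝ) ^ (d - 1 : ℕ) := by linarith
    have hlogr : Real.log r ≤ (r:ℝ) ^ (d - 1 : ℕ) := by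
      have := Real.log_le_sub_one_of_pos hrpos
      linarith
    have Hn : 2 * (r:ℝ)^2 ≤ (δ/2) ^ (r ^ (d - 1)) * n := by
      have hlhs : (0:ℝ) < 2*(r:ℝ)^2 := by positivity
      have hnpos' : (0:ℝ) < n := by exact_mod_cast hn0
      have hδ20 : (0:ℝ) < δ/2 := by linarith
      have hrhs : (0:ℝ) < (δ/2) ^ (r ^ (d - 1)) * n :=
        mul_pos (pow_pos hδ20 _) hnpos'
      rw [← Real.log_le_log_iff hlhs hrhs]
      rw [Real.log_mul (by norm_num) (by positivity), Real.log_pow,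
        Real.log_mul (ne_of_gt (pow_pos hδ20 _)) (ne_of_gt hnpos'), Real.log_pow,
        Real.log_div (ne_of_gt hδ0) (by norm_num)]
      push_cast
      -- goal: log 2 + 2 * log r ≤ r^(d-1) * (log δ - log 2) + log n
      have hlogδL : Real.log δ = - Real.log δ⁻¹ := by rw [hLinv]; ring
      rw [hlogδL]
      set R := (r:ℝ) ^ (d - 1 : ℕ) with hRdef
      set L := Real.log δ⁻¹ with hLdef
      have p1 : R * (3 * Real.log 2) ≤ R * L :=
        mul_le_mul_of_nonneg_left hL3 (by linarith)
      have p2 : R * 2 ≤ R * L := mul_le_mul_of_nonneg_left hL2 (by linarith)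
      have p3 : 1 * L ≤ R * L := mul_le_mul_of_nonneg_right hR1 (by linarith)
      have hlog2pos : (0:ℝ) < Real.log 2 := by linarith
      linarith [hfive, hlogr, p1, p2, p3]
    exact grid_aux (d - 1) (Fin d) X (by simp only [Fintype.card_fin]; omega) n r δ
      hr2 hδ0 hδlt1.le hX Y hY Hn
end

section
/- For positive integers $n, r, d$ with $n \ge r \ge 2$ and real $\delta > 0$ satisfying $(2^{-d-1}\delta)^{2r^{d-1}} \cdot n r^{-1} \ge 1$, define $N_d(n, r, \delta)$ to be the minimum over all subsets $Y \subseteq X_1 \times \cdots \times X_d$ (with each $|X_i| = n$) of cardinality at least $\delta n^d$ of the number of choices of subsets $Z_1, \dots, Z_d$ each of cardinality $r$ with $Z_1 \times \cdots \times Z_d \subseteq Y$. Then $N_d(n, r, \delta) \ge (2^{-d-1}\delta)^{\frac{r^{d+1} - r}{r-1}} \cdot \frac{n^{rd}}{(r!)^d}$. -/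
set_option maxHeartbeats 1000000

open Finset



def gridSet (n d r : ℕ) (Y : Finset (Fin d → Fin n)) : Finset (Fin d → Finset (Fin n)) :=
  Finset.univ.filter fun Z => (∀ i, (Z i).card = r) ∧
    ∀ f : Fin d → Fin n, (∀ i, f i ∈ Z i) → f ∈ Y

def fib (n d : ℕ) (Y : Finset (Fin (d + 1) → Fin n)) (W : Finset (Fin n)) :
    Finset (Fin d → Fin n) :=
  Finset.univ.filter fun g => ∀ x ∈ W, Fin.cons x g ∈ Y

def deg (n d : ℕ) (Y : Finset (Fin (d + 1) → Fin n)) (g : Fin d → Fin n) : ℕ :=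
  (Finset.univ.filter fun x : Fin n => Fin.cons x g ∈ Y).card

-- Lemma A : base case count
theorem gridSet_one (n r : ℕ) (Y : Finset (Fin 1 → Fin n)) :
    (gridSet n 1 r Y).card = Y.card.choose r := by
  classical
  have hfun : ∀ f : Fin 1 → Fin n, f = fun _ => f 0 := by
    intro f; funext i; rw [Subsingleton.elim i 0]
  set Y' : Finset (Fin n) := Y.image (fun f => f 0) with hY'
  have hmem : ∀ f : Fin 1 → Fin n, f ∈ Y ↔ f 0 ∈ Y' := by
    intro f
    constructor
    · intro hf; exact mem_image_of_mem _ hf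
    · intro hf
      obtain ⟨g, hg, hgf⟩ := mem_image.1 hf
      have : g = f := by rw [hfun g, hfun f, hgf]
      rwa [← this]
  have hcard : Y'.card = Y.card := by
    apply card_image_of_injOn
    intro f _ g _ hfg
    have h0 : f 0 = g 0 := hfg
    rw [hfun f, hfun g, h0]
  have : (gridSet n 1 r Y).card = (Y'.powersetCard r).card := by
    refine card_bij' (fun Z _ => Z 0) (fun W _ => fun _ => W) ?hi ?hj ?left ?right
    case hi =>
      intro Z hZ
      simp only [gridSet, mem_filter, mem_univ, true_and] at hZ
      rw [mem_powersetCard]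
      refine ⟨?_, hZ.1 0⟩
      intro x hx
      have hx' : (fun _ : Fin 1 => x) ∈ Y := by
        apply hZ.2
        intro i
        have : Z i = Z 0 := by rw [Subsingleton.elim i 0]
        rw [this]; exact hx
      exact (hmem _).1 hx'
    case hj =>
      intro W hW
      rw [mem_powersetCard] at hW
      simp only [gridSet, mem_filter, mem_univ, true_and]
      refine ⟨fun _ => hW.2, ?_⟩
      intro f hf
      exact (hmem f).2 (hW.1 (hf 0))
    case left =>
      intro Z hZ
      funext i; show Z 0 = Z i; rw [Subsingleton.elim i 0]
    case right =>
      intro W hW; rfl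
  rw [this, card_powersetCard, hcard]


-- Lemma B : split off the first coordinate
theorem gridSet_split (n d r : ℕ)
    (Y : Finset (Fin (d + 1) → Fin n))
    (fib : Finset (Fin n) → Finset (Fin d → Fin n))
    (hfib : ∀ W, fib W = Finset.univ.filter fun g => ∀ x ∈ W, Fin.cons x g ∈ Y)
    (gridSet : ∀ d : ℕ, Finset (Fin d → Fin n) → Finset (Fin d → Finset (Fin n)))
    (hgs : ∀ d (Y : Finset (Fin d → Fin n)), gridSet d Y = Finset.univ.filter fun Z =>
      (∀ i, (Z i).card = r) ∧ ∀ f : Fin d → Fin n, (∀ i, f i ∈ Z i) → f ∈ Y) :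
    (gridSet (d+1) Y).card =
      ∑ W ∈ powersetCard r (Finset.univ : Finset (Fin n)), (gridSet d (fib W)).card := by
  classical
  rw [card_eq_sum_card_fiberwise (f := fun Z => Z 0)
    (t := powersetCard r (Finset.univ : Finset (Fin n)))]
  · apply Finset.sum_congr rfl
    intro W hW
    rw [mem_powersetCard] at hW
    refine card_bij' (fun Z _ => fun i => Z i.succ) (fun T _ => Fin.cons W T) ?hi ?hj ?left ?right
    case hi =>
      intro Z hZ
      rw [mem_filter] at hZ
      obtain ⟨hZg, hZ0⟩ := hZ
      rw [hgs] at hZg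
      simp only [mem_filter, mem_univ, true_and] at hZg
      rw [hgs]
      simp only [mem_filter, mem_univ, true_and]
      refine ⟨fun i => hZg.1 i.succ, ?_⟩
      intro g hg
      rw [hfib, mem_filter]
      refine ⟨mem_univ _, ?_⟩
      intro x hx
      apply hZg.2
      intro i
      refine Fin.cases ?_ ?_ i
      · rw [Fin.cons_zero, hZ0]; exact hx
      · intro j; rw [Fin.cons_succ]; exact hg j
    case hj =>
      intro T hT
      rw [hgs] at hT
      simp only [mem_filter, mem_univ, true_and] at hT
      rw [mem_filter, hgs]
      simp only [mem_filter, mem_univ, true_and]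
      refine ⟨⟨?_, ?_⟩, Fin.cons_zero _ _⟩
      · intro i
        refine Fin.cases ?_ ?_ i
        · rw [Fin.cons_zero]; exact hW.2
        · intro j; rw [Fin.cons_succ]; exact hT.1 j
      · intro f hf
        have htail : (fun j : Fin d => f j.succ) ∈ fib W := by
          apply hT.2
          intro j
          have := hf j.succ
          rwa [Fin.cons_succ] at this
        rw [hfib, mem_filter] at htail
        have h0 : f 0 ∈ W := by have := hf 0; rwa [Fin.cons_zero] at this
        have hc : Fin.cons (f 0) (Fin.tail f) ∈ Y := htail.2 (f 0) h0
        rwa [Fin.cons_self_tail] at hc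
    case left =>
      intro Z hZ
      rw [mem_filter] at hZ
      funext i
      show (Fin.cons W (fun j => Z j.succ) : Fin (d+1) → Finset (Fin n)) i = Z i
      refine Fin.cases ?_ ?_ i
      · rw [Fin.cons_zero, hZ.2]
      · intro j; rw [Fin.cons_succ]
    case right =>
      intro T hT
      funext i
      show (Fin.cons W T : Fin (d+1) → Finset (Fin n)) i.succ = T i
      rw [Fin.cons_succ]
  · intro Z hZ
    rw [hgs] at hZ
    simp only [mem_coe, mem_filter, mem_univ, true_and] at hZ
    rw [mem_coe, mem_powersetCard]
    exact ⟨subset_univ _, hZ.1 0⟩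

-- Lemma C : double counting
theorem fib_sum (n d r : ℕ) (Y : Finset (Fin (d + 1) → Fin n)) :
    ∑ W ∈ powersetCard r (Finset.univ : Finset (Fin n)),
        (Finset.univ.filter fun g : Fin d → Fin n => ∀ x ∈ W, Fin.cons x g ∈ Y).card =
      ∑ g : Fin d → Fin n,
        ((Finset.univ.filter fun x : Fin n => Fin.cons x g ∈ Y).card).choose r := by
  classical
  have : ∀ W : Finset (Fin n),
      (Finset.univ.filter fun g : Fin d → Fin n => ∀ x ∈ W, Fin.cons x g ∈ Y).card =
      ∑ g : Fin d → Fin n, if (∀ x ∈ W, Fin.cons x g ∈ Y) then 1 else 0 := by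
    intro W; rw [card_filter]
  simp_rw [this]
  rw [Finset.sum_comm]
  apply Finset.sum_congr rfl
  intro g _
  have : ∑ W ∈ powersetCard r (Finset.univ : Finset (Fin n)),
      (if (∀ x ∈ W, Fin.cons x g ∈ Y) then 1 else 0) =
      ((powersetCard r (Finset.univ : Finset (Fin n))).filter
        fun W => ∀ x ∈ W, Fin.cons x g ∈ Y).card := by
    rw [card_filter]
  rw [this]
  have hfilter : (powersetCard r (Finset.univ : Finset (Fin n))).filter
      (fun W => ∀ x ∈ W, Fin.cons x g ∈ Y) =
      powersetCard r (Finset.univ.filter fun x : Fin n => Fin.cons x g ∈ Y) := by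
    ext W
    simp only [mem_filter, mem_powersetCard, subset_univ, true_and, subset_iff, mem_univ,
      mem_filter]
    tauto
  rw [hfilter, card_powersetCard]

-- Lemma D : degree sum
theorem deg_sum (n d : ℕ) (Y : Finset (Fin (d + 1) → Fin n)) :
    ∑ g : Fin d → Fin n, (Finset.univ.filter fun x : Fin n => Fin.cons x g ∈ Y).card =
      Y.card := by
  classical
  rw [card_eq_sum_card_fiberwise (f := fun f => Fin.tail f) (t := Finset.univ) (fun _ _ => mem_univ _)]
  apply Finset.sum_congr rfl
  intro g _
  refine card_bij' (fun x _ => (Fin.cons x g : Fin (d+1) → Fin n)) (fun f _ => f 0) ?hi ?hj ?left ?right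
  case hi =>
    intro x hx
    rw [mem_filter] at hx
    rw [mem_filter]
    refine ⟨hx.2, ?_⟩
    show Fin.tail (Fin.cons x g : Fin (d+1) → Fin n) = g
    funext j; simp [Fin.tail]
  case hj =>
    intro f hf
    rw [mem_filter] at hf
    rw [mem_filter]
    refine ⟨mem_univ _, ?_⟩
    have h2 : (Fin.cons (f 0) g : Fin (d+1) → Fin n) = f := by
      rw [← hf.2]; exact Fin.cons_self_tail f
    show (Fin.cons (f 0) g : Fin (d+1) → Fin n) ∈ Y
    rw [h2]; exact hf.1
  case left =>
    intro x hx
    show (Fin.cons x g : Fin (d+1) → Fin n) 0 = x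
    rw [Fin.cons_zero]
  case right =>
    intro f hf
    rw [mem_filter] at hf
    show (Fin.cons (f 0) g : Fin (d+1) → Fin n) = f
    rw [← hf.2]
    exact Fin.cons_self_tail f


def EE (r d : ℕ) : ℕ := ∑ j ∈ Finset.range d, r ^ (j + 1)

lemma EE_succ (r d : ℕ) : EE r (d + 1) = r * EE r d + r := by
  unfold EE
  rw [Finset.sum_range_succ', Finset.mul_sum]
  congr 1
  · apply Finset.sum_congr rfl; intro j _; ring
  · exact pow_one r

lemma EE_cast (r d : ℕ) : ((r : ℝ) - 1) * (EE r d : ℝ) = (r : ℝ) ^ (d + 1) - r := by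
  induction d with
  | zero => simp [EE]
  | succ d ih =>
      rw [EE_succ]
      push_cast
      linear_combination (r : ℝ) * ih

lemma cast_sub_bound (a b : ℕ) : (a : ℝ) - b ≤ ((a + 1 - b : ℕ) : ℝ) := by
  rcases le_or_gt b a with hba | hba
  · rw [Nat.cast_sub (by omega)]
    push_cast
    linarith
  · have h1 : (a : ℝ) < b := by exact_mod_cast hba
    have h2 : (0 : ℝ) ≤ ((a + 1 - b : ℕ) : ℝ) := Nat.cast_nonneg _
    linarith

theorem key : ∀ d : ℕ, ∀ n r : ℕ, ∀ δ : ℝ, 2 ≤ r → r ≤ n → 0 < δ → δ ≤ 1 →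
    (r : ℝ) ≤ (((2:ℝ) ^ (d + 2))⁻¹ * δ) ^ (2 * r ^ d) * n →
    ∀ Y : Finset (Fin (d+1) → Fin n), δ * (n:ℝ) ^ (d+1) ≤ (Y.card : ℝ) →
    (((2:ℝ) ^ (d + 2))⁻¹ * δ) ^ (EE r (d+1)) * (n:ℝ) ^ (r * (d+1)) / (r.factorial : ℝ) ^ (d+1)
      ≤ ((gridSet n (d+1) r Y).card : ℝ) := by
  intro d
  induction d with
  | zero =>
    intro n r δ hr hrn hδ0 hδ1 hcond Y hY
    set c : ℝ := ((2:ℝ) ^ (0 + 2))⁻¹ * δ with hc_def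
    have hc0 : 0 < c := by positivity
    have hc4 : c = δ / 4 := by rw [hc_def]; norm_num; ring
    have hn0 : (0:ℝ) < n := by
      have : (0:ℕ) < n := by omega
      exact_mod_cast this
    have hcond' : (r : ℝ) ≤ c ^ 2 * n := by
      have he : 2 * r ^ 0 = 2 := by norm_num
      rwa [he] at hcond
    have hF1 : (r : ℝ) ≤ δ / 2 * n := by
      have h1 : c ^ 2 ≤ δ / 2 := by rw [hc4]; nlinarith
      nlinarith
    have hrY : r ≤ Y.card := by
      have h1 : (r : ℝ) ≤ (Y.card : ℝ) := by
        have : δ * (n:ℝ) ^ (0+1) = δ * n := by ring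
        rw [this] at hY
        nlinarith
      exact_mod_cast h1
    rw [gridSet_one]
    have hEE : EE r 1 = r := by simp [EE]
    have hfac : (0:ℝ) < (r.factorial : ℝ) := by exact_mod_cast r.factorial_pos
    have key1 : ((Y.card + 1 - r : ℕ) ^ r : ℝ) / (r.factorial : ℝ) ≤ (Y.card.choose r : ℝ) :=
      Nat.pow_le_choose r Y.card
    have hstep : δ / 2 * n ≤ ((Y.card + 1 - r : ℕ) : ℝ) := by
      have h1 : (Y.card : ℝ) - r ≤ ((Y.card + 1 - r : ℕ) : ℝ) := cast_sub_bound _ _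
      have h2 : δ * (n:ℝ) ≤ Y.card := by
        have : δ * (n:ℝ) ^ (0+1) = δ * n := by ring
        rwa [this] at hY
      linarith
    have hcn : c * n ≤ δ / 2 * n := by
      rw [hc4]; nlinarith
    have hpow : c ^ r * (n:ℝ) ^ (r * (0+1)) ≤ ((Y.card + 1 - r : ℕ) : ℝ) ^ r := by
      have h1 : c ^ r * (n:ℝ) ^ (r * (0+1)) = (c * n) ^ r := by
        rw [mul_pow]; ring
      rw [h1]
      apply pow_le_pow_left₀ (by positivity)
      linarith
    calc c ^ EE r 1 * (n:ℝ) ^ (r * (0+1)) / (r.factorial : ℝ) ^ (0+1)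
        = c ^ r * (n:ℝ) ^ (r * (0+1)) / (r.factorial : ℝ) := by rw [hEE]; ring
      _ ≤ ((Y.card + 1 - r : ℕ) : ℝ) ^ r / (r.factorial : ℝ) := by
          exact div_le_div_of_nonneg_right hpow hfac.le
      _ = ((Y.card + 1 - r : ℕ) ^ r : ℝ) / (r.factorial : ℝ) := by push_cast; ring
      _ ≤ (Y.card.choose r : ℝ) := key1
  | succ d ih =>
    intro n r δ hr hrn hδ0 hδ1 hcond Y hY
    classical
    obtain ⟨r₁, hr₁⟩ : ∃ r₁, r = r₁ + 1 := ⟨r - 1, by omega⟩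
    set c : ℝ := ((2:ℝ) ^ (d + 1 + 2))⁻¹ * δ with hc_def
    set A : ℝ := (2:ℝ) ^ (d + 2) with hA_def
    have hA1 : (1:ℝ) ≤ A := one_le_pow₀ (by norm_num)
    have hA4 : (4:ℝ) ≤ A := by
      calc (4:ℝ) = 2 ^ 2 := by norm_num
        _ ≤ 2 ^ (d + 2) := by
            apply pow_le_pow_right₀ (by norm_num) (by omega)
    have hB : (2:ℝ) ^ (d + 1 + 2) = 2 * A := by
      rw [hA_def, show d + 1 + 2 = (d + 2) + 1 by ring, pow_succ]; ring
    have hc0 : 0 < c := by positivity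
    have hcB : c = δ / (2 * A) := by rw [hc_def, hB]; ring
    have hA0 : (0:ℝ) < A := by positivity
    have hc1 : c ≤ 1 / 8 := by
      rw [hcB]
      rw [div_le_div_iff₀ (by positivity) (by norm_num)]
      nlinarith
    have hn0 : (0:ℝ) < n := by
      have : (0:ℕ) < n := by omega
      exact_mod_cast this
    have hfac : (0:ℝ) < (r.factorial : ℝ) := by exact_mod_cast r.factorial_pos
    set δ' : ℝ := A * c ^ r with hδ'_def
    have hδ'0 : 0 < δ' := by positivity
    have hkeyA : ((2:ℝ) ^ (d + 2))⁻¹ * δ' = c ^ r := by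
      rw [hδ'_def, ← hA_def]
      field_simp
    have hcr2 : c ^ r ≤ c ^ 2 := pow_le_pow_of_le_one hc0.le (by linarith) hr
    have hδ'1 : δ' ≤ 1 := by
      rw [hδ'_def]
      have h1' : c ≤ 1/(2*A) := by
        rw [hcB]
        exact div_le_div_of_nonneg_right hδ1 (by positivity)
      have h1 : c ^ 2 ≤ (1/(2*A))^2 := pow_le_pow_left₀ hc0.le h1' 2
      have h2 : A * c ^ r ≤ A * (1/(2*A))^2 := by
        apply mul_le_mul_of_nonneg_left (hcr2.trans h1) hA0.le
      have h3 : A * (1/(2*A))^2 = 1 / (4 * A) := by field_simp; ring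
      rw [h3] at h2
      have h4 : 1 / (4 * A) ≤ 1 := by
        rw [div_le_one (by positivity)]; linarith
      linarith
    -- hcond gives r ≤ c ^ (2 * r ^ (d+1)) * n
    have hcond2 : (r:ℝ) ≤ c ^ 2 * n := by
      have h1 : c ^ (2 * r ^ (d + 1)) ≤ c ^ 2 := by
        apply pow_le_pow_of_le_one hc0.le (by linarith)
        have : 1 ≤ r ^ (d + 1) := Nat.one_le_pow _ _ (by omega)
        omega
      have h2 : c ^ (2 * r ^ (d + 1)) * n ≤ c ^ 2 * n :=
        mul_le_mul_of_nonneg_right h1 hn0.le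
      exact hcond.trans h2
    have hF1 : (r:ℝ) ≤ δ / 2 * n := by
      have h1 : c ≤ δ / 8 := by
        rw [hcB]
        rw [div_le_div_iff₀ (by positivity) (by norm_num)]
        nlinarith
      have h2a : c * c ≤ (δ/8) * (1/8) := mul_le_mul h1 hc1 hc0.le (by positivity)
      have h2 : c ^ 2 ≤ δ / 2 := by
        rw [pow_two]; linarith
      have h2b : c ^ 2 * (n:ℝ) ≤ δ / 2 * (n:ℝ) := mul_le_mul_of_nonneg_right h2 hn0.le
      linarith
    -- IH condition for δ'
    have hIHcond : (r : ℝ) ≤ (((2:ℝ) ^ (d + 2))⁻¹ * δ') ^ (2 * r ^ d) * n := by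
      rw [hkeyA, ← pow_mul]
      have he : r * (2 * r ^ d) = 2 * r ^ (d + 1) := by ring
      rw [he]
      exact hcond
    -- Setup for the counting
    set P : Finset (Finset (Fin n)) := powersetCard r (Finset.univ : Finset (Fin n)) with hP_def
    set fibW : Finset (Fin n) → Finset (Fin (d+1) → Fin n) :=
      fun W => Finset.univ.filter fun g => ∀ x ∈ W, Fin.cons x g ∈ Y with hfibW_def
    set degg : (Fin (d+1) → Fin n) → ℕ :=
      fun g => (Finset.univ.filter fun x : Fin n => Fin.cons x g ∈ Y).card with hdegg_def
    have hNuniv : ((Finset.univ : Finset (Fin (d+1) → Fin n)).card : ℝ) = (n:ℝ) ^ (d+1) := by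
      rw [Finset.card_univ, Fintype.card_fun]
      simp
    set S : ℝ := ∑ W ∈ P, ((fibW W).card : ℝ) with hS_def
    have hS1 : S = ∑ g : Fin (d+1) → Fin n, ((degg g).choose r : ℝ) := by
      rw [hS_def]
      have := fib_sum n (d+1) r Y
      rw [← Nat.cast_sum, ← Nat.cast_sum, this]
    set h : (Fin (d+1) → Fin n) → ℝ := fun g => ((degg g + 1 - r : ℕ) : ℝ) with hh_def
    have hh0 : ∀ g, 0 ≤ h g := fun g => Nat.cast_nonneg _
    have hS2 : ∀ g : Fin (d+1) → Fin n, (h g) ^ r / (r.factorial : ℝ) ≤ ((degg g).choose r : ℝ) := by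
      intro g
      exact Nat.pow_le_choose (α := ℝ) r (degg g)
    -- Jensen
    have hJensen : (∑ g : Fin (d+1) → Fin n, h g) ^ r / ((n:ℝ)^(d+1)) ^ r₁
        ≤ ∑ g : Fin (d+1) → Fin n, (h g) ^ r := by
      have := pow_sum_div_card_le_sum_pow (s := Finset.univ)
        (f := h) (fun i _ => hh0 i) r₁
      rw [hNuniv] at this
      rw [hr₁]
      exact this
    -- lower bound on sum of h
    have hsum_deg : ∑ g : Fin (d+1) → Fin n, ((degg g : ℕ) : ℝ) = (Y.card : ℝ) := by
      rw [← Nat.cast_sum]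
      exact_mod_cast congrArg (Nat.cast : ℕ → ℝ) (deg_sum n (d+1) Y)
    have hsum_h : δ / 2 * (n:ℝ) ^ (d+2) ≤ ∑ g : Fin (d+1) → Fin n, h g := by
      have h1 : ∀ g : Fin (d+1) → Fin n, ((degg g : ℕ) : ℝ) - r ≤ h g :=
        fun g => cast_sub_bound _ _
      have h2 : (∑ g : Fin (d+1) → Fin n, (((degg g : ℕ) : ℝ) - r))
          ≤ ∑ g : Fin (d+1) → Fin n, h g := Finset.sum_le_sum fun g _ => h1 g
      have h3 : ∑ g : Fin (d+1) → Fin n, (((degg g : ℕ) : ℝ) - r)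
          = (Y.card : ℝ) - r * (n:ℝ)^(d+1) := by
        rw [Finset.sum_sub_distrib, hsum_deg, Finset.sum_const, nsmul_eq_mul, hNuniv]
        ring
      have h4 : (r:ℝ) * (n:ℝ)^(d+1) ≤ (δ/2 * n) * (n:ℝ)^(d+1) :=
        mul_le_mul_of_nonneg_right hF1 (by positivity)
      have h5 : δ * (n:ℝ) ^ (d+2) ≤ (Y.card : ℝ) := by
        have he : (n:ℝ) ^ (d+2) = (n:ℝ) ^ (d+1+1) := by norm_num
        rw [he]; exact hY
      have h6 : (δ/2 * n) * (n:ℝ)^(d+1) = δ/2 * (n:ℝ)^(d+2) := by ring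
      have h7 : δ * (n:ℝ)^(d+2) - δ/2 * (n:ℝ)^(d+2) = δ/2 * (n:ℝ)^(d+2) := by ring
      linarith [h2, h3, h4, h5, h6, h7]
    -- combine: lower bound on ∑ h^r
    have hsum_hr : (δ/2)^r * (n:ℝ)^r * (n:ℝ)^(d+1) ≤ ∑ g : Fin (d+1) → Fin n, (h g) ^ r := by
      have h1 : (δ/2 * (n:ℝ)^(d+2)) ^ r ≤ (∑ g : Fin (d+1) → Fin n, h g) ^ r := by
        apply pow_le_pow_left₀ (by positivity) hsum_h
      have h2 : (δ/2 * (n:ℝ)^(d+2)) ^ r / ((n:ℝ)^(d+1)) ^ r₁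
          ≤ (∑ g : Fin (d+1) → Fin n, h g) ^ r / ((n:ℝ)^(d+1)) ^ r₁ :=
        div_le_div_of_nonneg_right h1 (by positivity) |>.trans_eq rfl
      have h3 : (δ/2 * (n:ℝ)^(d+2)) ^ r / ((n:ℝ)^(d+1)) ^ r₁
          = (δ/2)^r * (n:ℝ)^r * (n:ℝ)^(d+1) := by
        rw [hr₁]
        rw [div_eq_iff (by positivity)]
        ring
      rw [h3] at h2
      exact h2.trans hJensen
    have hS_ge : (δ/2)^r * ((n:ℝ)^r / (r.factorial : ℝ) * (n:ℝ)^(d+1)) ≤ S := by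
      rw [hS1]
      have h1 : ∑ g : Fin (d+1) → Fin n, (h g) ^ r / (r.factorial : ℝ)
          ≤ ∑ g : Fin (d+1) → Fin n, ((degg g).choose r : ℝ) :=
        Finset.sum_le_sum fun g _ => hS2 g
      have h2 : ∑ g : Fin (d+1) → Fin n, (h g) ^ r / (r.factorial : ℝ)
          = (∑ g : Fin (d+1) → Fin n, (h g) ^ r) / (r.factorial : ℝ) := by
        rw [Finset.sum_div]
      have h3 : (δ/2)^r * ((n:ℝ)^r / (r.factorial : ℝ) * (n:ℝ)^(d+1))
          = ((δ/2)^r * (n:ℝ)^r * (n:ℝ)^(d+1)) / (r.factorial : ℝ) := by ring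
      rw [h3]
      rw [h2] at h1
      have h4 := div_le_div_of_nonneg_right hsum_hr hfac.le
      exact h4.trans h1
    -- good set
    set G : Finset (Finset (Fin n)) :=
      P.filter fun W => δ' * (n:ℝ)^(d+1) ≤ ((fibW W).card : ℝ) with hG_def
    have hfible : ∀ W, ((fibW W).card : ℝ) ≤ (n:ℝ)^(d+1) := by
      intro W
      rw [← hNuniv]
      exact_mod_cast Finset.card_filter_le _ _
    have hPcard : (P.card : ℝ) ≤ (n:ℝ)^r / (r.factorial : ℝ) := by
      rw [hP_def, card_powersetCard, Finset.card_univ, Fintype.card_fin]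
      exact_mod_cast Nat.choose_le_pow_div r n
    have hS_le : S ≤ (G.card : ℝ) * (n:ℝ)^(d+1) + δ' * ((n:ℝ)^r / (r.factorial : ℝ) * (n:ℝ)^(d+1)) := by
      rw [hS_def, ← Finset.sum_filter_add_sum_filter_not P
        (fun W => δ' * (n:ℝ)^(d+1) ≤ ((fibW W).card : ℝ))]
      have hg1 : ∑ W ∈ G, ((fibW W).card : ℝ) ≤ (G.card : ℝ) * (n:ℝ)^(d+1) := by
        have := Finset.sum_le_card_nsmul G (fun W => ((fibW W).card : ℝ)) ((n:ℝ)^(d+1))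
          (fun W _ => hfible W)
        rwa [nsmul_eq_mul] at this
      have hg2 : ∑ W ∈ P.filter (fun W => ¬ (δ' * (n:ℝ)^(d+1) ≤ ((fibW W).card : ℝ))),
          ((fibW W).card : ℝ) ≤ δ' * ((n:ℝ)^r / (r.factorial : ℝ) * (n:ℝ)^(d+1)) := by
        have hb1 : ∑ W ∈ P.filter (fun W => ¬ (δ' * (n:ℝ)^(d+1) ≤ ((fibW W).card : ℝ))),
            ((fibW W).card : ℝ)
            ≤ (P.filter (fun W => ¬ (δ' * (n:ℝ)^(d+1) ≤ ((fibW W).card : ℝ)))).card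
              • (δ' * (n:ℝ)^(d+1)) := by
          apply Finset.sum_le_card_nsmul
          intro W hW
          rw [Finset.mem_filter] at hW
          exact (not_le.1 hW.2).le
        rw [nsmul_eq_mul] at hb1
        have hb2 : ((P.filter (fun W => ¬ (δ' * (n:ℝ)^(d+1) ≤ ((fibW W).card : ℝ)))).card : ℝ)
            ≤ (P.card : ℝ) := by exact_mod_cast Finset.card_filter_le _ _
        have hb3 : ((P.filter (fun W => ¬ (δ' * (n:ℝ)^(d+1) ≤ ((fibW W).card : ℝ)))).card : ℝ)
              * (δ' * (n:ℝ)^(d+1)) ≤ (P.card : ℝ) * (δ' * (n:ℝ)^(d+1)) :=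
          mul_le_mul_of_nonneg_right hb2 (by positivity)
        have hb4 : (P.card : ℝ) * (δ' * (n:ℝ)^(d+1))
            ≤ ((n:ℝ)^r / (r.factorial : ℝ)) * (δ' * (n:ℝ)^(d+1)) :=
          mul_le_mul_of_nonneg_right hPcard (by positivity)
        have hb5 : ((n:ℝ)^r / (r.factorial : ℝ)) * (δ' * (n:ℝ)^(d+1))
            = δ' * ((n:ℝ)^r / (r.factorial : ℝ) * (n:ℝ)^(d+1)) := by ring
        linarith
      linarith
    -- lower bound on G.card
    have hc_lt : c ^ r ≤ (δ/2)^r - δ' := by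
      have hδ2 : δ / 2 = c * A := by rw [hcB]; field_simp
      have h1 : (δ/2)^r = c^r * A^r := by rw [hδ2, mul_pow]
      have hAr : A^2 ≤ A^r := pow_le_pow_right₀ hA1 hr
      have hA21 : A + 1 ≤ A^2 := by nlinarith
      have h2 : A + 1 ≤ A^r := hA21.trans hAr
      have h3 : c^r * (A + 1) ≤ c^r * A^r :=
        mul_le_mul_of_nonneg_left h2 (by positivity)
      rw [hδ'_def]
      nlinarith [pow_pos hc0 r]
    have ht0 : (0:ℝ) ≤ (n:ℝ)^r / (r.factorial : ℝ) * (n:ℝ)^(d+1) := by positivity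
    have hGood : c^r * ((n:ℝ)^r / (r.factorial : ℝ)) ≤ (G.card : ℝ) := by
      have h1 : c^r * ((n:ℝ)^r / (r.factorial : ℝ) * (n:ℝ)^(d+1))
          ≤ ((δ/2)^r - δ') * ((n:ℝ)^r / (r.factorial : ℝ) * (n:ℝ)^(d+1)) :=
        mul_le_mul_of_nonneg_right hc_lt ht0
      have h2 : c^r * ((n:ℝ)^r / (r.factorial : ℝ) * (n:ℝ)^(d+1))
          ≤ (G.card : ℝ) * (n:ℝ)^(d+1) := by nlinarith
      have h3 : c^r * ((n:ℝ)^r / (r.factorial : ℝ) * (n:ℝ)^(d+1))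
          = (c^r * ((n:ℝ)^r / (r.factorial : ℝ))) * (n:ℝ)^(d+1) := by ring
      rw [h3] at h2
      exact le_of_mul_le_mul_right h2 (by positivity)
    -- apply IH to each good W
    set B : ℝ := (c ^ r) ^ (EE r (d+1)) * (n:ℝ) ^ (r * (d+1)) / (r.factorial : ℝ) ^ (d+1)
      with hB_def
    have hB0 : 0 ≤ B := by positivity
    have hIH : ∀ W ∈ G, B ≤ ((gridSet n (d+1) r (fibW W)).card : ℝ) := by
      intro W hW
      rw [hG_def, Finset.mem_filter] at hW
      have := ih n r δ' hr hrn hδ'0 hδ'1 hIHcond (fibW W) hW.2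
      rwa [hkeyA] at this
    -- split identity
    have hsplit : ((gridSet n (d+1+1) r Y).card : ℕ)
        = ∑ W ∈ P, (gridSet n (d+1) r (fibW W)).card := by
      exact gridSet_split n (d+1) r Y fibW (fun W => rfl)
        (fun d Y => gridSet n d r Y) (fun d Y => rfl)
    have hmain : (G.card : ℝ) * B ≤ ((gridSet n (d+1+1) r Y).card : ℝ) := by
      have h1 : ∑ W ∈ G, B ≤ ∑ W ∈ G, ((gridSet n (d+1) r (fibW W)).card : ℝ) :=
        Finset.sum_le_sum hIH
      have h2 : ∑ W ∈ G, ((gridSet n (d+1) r (fibW W)).card : ℝ)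
          ≤ ∑ W ∈ P, ((gridSet n (d+1) r (fibW W)).card : ℝ) := by
        apply Finset.sum_le_sum_of_subset_of_nonneg (Finset.filter_subset _ _)
        intro W _ _
        positivity
      have h3 : ∑ W ∈ G, B = (G.card : ℝ) * B := by
        rw [Finset.sum_const, nsmul_eq_mul]
      have h4 : ((gridSet n (d+1+1) r Y).card : ℝ)
          = ∑ W ∈ P, ((gridSet n (d+1) r (fibW W)).card : ℝ) := by
        rw [← Nat.cast_sum]
        exact_mod_cast congrArg (Nat.cast : ℕ → ℝ) hsplit
      rw [h4]
      linarith
    -- final arithmetic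
    have hfinal : c ^ (EE r (d+1+1)) * (n:ℝ) ^ (r * (d+1+1)) / (r.factorial : ℝ) ^ (d+1+1)
        = (c^r * ((n:ℝ)^r / (r.factorial : ℝ))) * B := by
      rw [hB_def, EE_succ r (d+1)]
      rw [pow_add, pow_mul]
      rw [show r * (d+1+1) = r + r * (d+1) by ring, pow_add]
      rw [show d+1+1 = (d+1) + 1 by ring, pow_succ]
      ring
    rw [hfinal]
    calc (c^r * ((n:ℝ)^r / (r.factorial : ℝ))) * B ≤ (G.card : ℝ) * B :=
          mul_le_mul_of_nonneg_right hGood hB0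
      _ ≤ ((gridSet n (d+1+1) r Y).card : ℝ) := hmain

theorem stmt4 (n r d : ℕ) (hr : 2 ≤ r) (hrn : r ≤ n) (hd : 0 < d) (δ : ℝ) (hδ : 0 < δ)
    (hcond : 1 ≤ ((2 : ℝ) ^ (-(d : ℝ) - 1) * δ) ^ (2 * r ^ (d - 1)) * n / r)
    (Y : Finset (Fin d → Fin n)) (hY : δ * (n : ℝ) ^ d ≤ Y.card) :
    ((2 : ℝ) ^ (-(d : ℝ) - 1) * δ) ^ (((r : ℝ) ^ (d + 1) - r) / ((r : ℝ) - 1)) *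
        (n : ℝ) ^ (r * d) / (r.factorial : ℝ) ^ d ≤
      (Nat.card {Z : Fin d → Finset (Fin n) //
          (∀ i, (Z i).card = r) ∧ ∀ f : Fin d → Fin n, (∀ i, f i ∈ Z i) → f ∈ Y} : ℝ) := by
  obtain ⟨d', rfl⟩ : ∃ d', d = d' + 1 := ⟨d - 1, by omega⟩
  have hn0 : (0:ℝ) < n := by
    have : (0:ℕ) < n := by omega
    exact_mod_cast this
  have hr0 : (0:ℝ) < r := by
    have : (0:ℕ) < r := by omega
    exact_mod_cast this
  -- rewrite rpow base
  have hbase : (2 : ℝ) ^ (-((d' + 1 : ℕ) : ℝ) - 1) = ((2:ℝ) ^ (d' + 2))⁻¹ := by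
    rw [show -(((d' + 1 : ℕ)) : ℝ) - 1 = -(((d' + 2 : ℕ)) : ℝ) by push_cast; ring]
    rw [Real.rpow_neg (by norm_num), Real.rpow_natCast]
  rw [hbase] at hcond ⊢
  -- rewrite rpow exponent
  have hrne : ((r:ℝ) - 1) ≠ 0 := by
    have : (2:ℝ) ≤ r := by exact_mod_cast hr
    linarith
  have hexp : (((r : ℝ) ^ (d' + 1 + 1) - r) / ((r : ℝ) - 1)) = ((EE r (d' + 1) : ℕ) : ℝ) := by
    rw [div_eq_iff hrne]
    have := EE_cast r (d' + 1)
    linarith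
  rw [hexp, Real.rpow_natCast]
  -- δ ≤ 1
  have hYle : (Y.card : ℝ) ≤ (n:ℝ) ^ (d' + 1) := by
    have h1 : Y.card ≤ (Finset.univ : Finset (Fin (d'+1) → Fin n)).card := Finset.card_le_univ Y
    have h2 : ((Finset.univ : Finset (Fin (d'+1) → Fin n)).card : ℝ) = (n:ℝ) ^ (d'+1) := by
      rw [Finset.card_univ, Fintype.card_fun]; simp
    calc (Y.card : ℝ) ≤ _ := by exact_mod_cast h1
      _ = (n:ℝ) ^ (d'+1) := h2
  have hδ1 : δ ≤ 1 := by
    have h1 : δ * (n:ℝ) ^ (d'+1) ≤ 1 * (n:ℝ) ^ (d'+1) := by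
      rw [one_mul]; exact hY.trans hYle
    exact le_of_mul_le_mul_right h1 (by positivity)
  -- transform hcond
  have hcond' : (r : ℝ) ≤ (((2:ℝ) ^ (d' + 2))⁻¹ * δ) ^ (2 * r ^ d') * n := by
    rw [le_div_iff₀ hr0] at hcond
    rw [one_mul] at hcond
    have he : (d' + 1) - 1 = d' := by omega
    rwa [he] at hcond
  -- identify Nat.card with gridSet card
  have hNat : (Nat.card {Z : Fin (d'+1) → Finset (Fin n) //
      (∀ i, (Z i).card = r) ∧ ∀ f : Fin (d'+1) → Fin n, (∀ i, f i ∈ Z i) → f ∈ Y} : ℕ)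
      = (gridSet n (d'+1) r Y).card := by
    rw [Nat.card_eq_fintype_card, Fintype.card_subtype]
    rfl
  rw [hNat]
  exact key d' n r δ hr hrn hδ hδ1 hcond' Y hY
end

section
/- Let $L > 2$, let $n$ be a positive integer, let $X_1, \dots, X_n$ be independent random variables uniformly distributed on $[0, L]$, and let $U_{(1)} \le \cdots \le U_{(n)}$ be their order statistics. For $\delta > 0$ and $0 \le L_0 < L$, the probability that there exists $i < n$ with $U_{(i)} \ge L_0$ and $U_{(i+1)} - U_{(i)} < \delta e^{-U_{(i)}}$ is at most $\frac{n(n-1)}{L^2} \cdot \delta e^{-L_0}$. -/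
open MeasureTheory Set

lemma map_pair_pi {n : ℕ} (μ : Measure ℝ) [IsProbabilityMeasure μ] {j k : Fin n}
    (hjk : j ≠ k) :
    Measure.map (fun X : Fin n → ℝ => (X j, X k)) (Measure.pi fun _ => μ) = μ.prod μ := by
  refine (Measure.prod_eq fun s t hs ht => ?_).symm
  have hf : Measurable (fun X : Fin n → ℝ => (X j, X k)) :=
    (measurable_pi_apply j).prodMk (measurable_pi_apply k)
  rw [Measure.map_apply hf (hs.prod ht)]
  have hpre : (fun X : Fin n → ℝ => (X j, X k)) ⁻¹' (s ×ˢ t)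
      = Set.pi Set.univ (fun i => if i = j then s else if i = k then t else Set.univ) := by
    ext X
    simp only [Set.mem_preimage, Set.mem_prod, Set.mem_pi, Set.mem_univ, true_implies]
    constructor
    · rintro ⟨h1, h2⟩ i
      by_cases hij : i = j
      · subst hij; simp [h1]
      · by_cases hik : i = k
        · subst hik; simp [hij, h2]
        · simp [hij, hik]
    · intro h
      refine ⟨by simpa using h j, ?_⟩
      have := h k
      simpa [if_neg (Ne.symm hjk)] using this
  rw [hpre, Measure.pi_pi]
  have hsub : ∀ i ∈ Finset.univ, i ∉ ({j, k} : Finset (Fin n)) →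
      μ ((fun i => if i = j then s else if i = k then t else Set.univ) i) = 1 := by
    intro i _ hi
    simp only [Finset.mem_insert, Finset.mem_singleton, not_or] at hi
    simp [hi.1, hi.2]
  rw [← Finset.prod_subset (Finset.subset_univ ({j, k} : Finset (Fin n))) hsub,
    Finset.prod_pair hjk]
  simp [Ne.symm hjk]

open MeasureTheory in
theorem stmt9 (L : ℝ) (hL : 2 < L) (n : ℕ) (hn : 0 < n)
    (δ : ℝ) (hδ : 0 < δ) (L0 : ℝ) (hL0 : 0 ≤ L0) (hL0' : L0 < L) :
    (Measure.pi (fun _ : Fin n => (ENNReal.ofReal L)⁻¹ • volume.restrict (Set.Icc 0 L)))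
        {X : Fin n → ℝ | ∃ i : Fin n, ∃ h : (i : ℕ) + 1 < n,
          L0 ≤ X (Tuple.sort X i) ∧
          X (Tuple.sort X ⟨(i : ℕ) + 1, h⟩) - X (Tuple.sort X i) <
            δ * Real.exp (-(X (Tuple.sort X i)))} ≤
      ENNReal.ofReal ((n : ℝ) * ((n : ℝ) - 1) / L ^ 2 * δ * Real.exp (-L0)) := by
  have hLpos : (0:ℝ) < L := by linarith
  set μ : Measure ℝ := (ENNReal.ofReal L)⁻¹ • volume.restrict (Set.Icc 0 L) with hμ
  have hμprob : IsProbabilityMeasure μ := by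
    constructor
    rw [hμ, Measure.smul_apply, Measure.restrict_apply MeasurableSet.univ,
      Set.univ_inter, Real.volume_Icc, smul_eq_mul, sub_zero]
    exact ENNReal.inv_mul_cancel (by simpa using hLpos) ENNReal.ofReal_ne_top
  set T : Set (ℝ × ℝ) :=
    {p : ℝ × ℝ | L0 ≤ p.1 ∧ p.1 ≤ p.2 ∧ p.2 < p.1 + δ * Real.exp (-p.1)} with hT
  have hTmeas : MeasurableSet T := by
    apply MeasurableSet.inter
    · exact measurableSet_le measurable_const measurable_fst
    · apply MeasurableSet.inter
      · exact measurableSet_le measurable_fst measurable_snd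
      · exact measurableSet_lt measurable_snd
          (measurable_fst.add ((Real.measurable_exp.comp measurable_fst.neg).const_mul δ))
  -- union bound
  have hsubset :
      {X : Fin n → ℝ | ∃ i : Fin n, ∃ h : (i : ℕ) + 1 < n,
          L0 ≤ X (Tuple.sort X i) ∧
          X (Tuple.sort X ⟨(i : ℕ) + 1, h⟩) - X (Tuple.sort X i) <
            δ * Real.exp (-(X (Tuple.sort X i)))} ⊆
      ⋃ p ∈ (Finset.univ.offDiag : Finset (Fin n × Fin n)),
        (fun X : Fin n → ℝ => (X p.1, X p.2)) ⁻¹' T := by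
    rintro X ⟨i, h, h1, h2⟩
    have hne : Tuple.sort X i ≠ Tuple.sort X ⟨(i : ℕ) + 1, h⟩ :=
      (Tuple.sort X).injective.ne (Fin.ne_of_val_ne (by simp))
    have hmono : X (Tuple.sort X i) ≤ X (Tuple.sort X ⟨(i : ℕ) + 1, h⟩) :=
      Tuple.monotone_sort X (show i ≤ ⟨(i : ℕ) + 1, h⟩ from by
        simp [Fin.le_def])
    refine Set.mem_biUnion (show (Tuple.sort X i, Tuple.sort X ⟨(i : ℕ) + 1, h⟩) ∈
        (Finset.univ.offDiag : Finset (Fin n × Fin n)) from ?_) ?_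
    · simp [Finset.mem_offDiag, hne]
    · exact ⟨h1, hmono, by linarith⟩
  refine le_trans (measure_mono hsubset) ?_
  refine le_trans (measure_biUnion_finset_le _ _) ?_
  -- per-pair bound
  have hpair : ∀ p ∈ (Finset.univ.offDiag : Finset (Fin n × Fin n)),
      (Measure.pi fun _ : Fin n => μ) ((fun X : Fin n → ℝ => (X p.1, X p.2)) ⁻¹' T)
        ≤ ENNReal.ofReal (L⁻¹ * (L⁻¹ * (δ * Real.exp (-L0)))) := by
    intro p hp
    have hne : p.1 ≠ p.2 := (Finset.mem_offDiag.mp hp).2.2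
    have hf : Measurable (fun X : Fin n → ℝ => (X p.1, X p.2)) :=
      (measurable_pi_apply p.1).prodMk (measurable_pi_apply p.2)
    rw [← Measure.map_apply hf hTmeas, map_pair_pi μ hne, Measure.prod_apply hTmeas]
    -- inner bound
    have hinner : ∀ x : ℝ, μ (Prod.mk x ⁻¹' T) ≤
        Set.indicator (Set.Ici L0)
          (fun x => (ENNReal.ofReal L)⁻¹ * ENNReal.ofReal (δ * Real.exp (-x))) x := by
      intro x
      by_cases hx : L0 ≤ x
      · rw [Set.indicator_of_mem (Set.mem_Ici.mpr hx)]
        have hsub : Prod.mk x ⁻¹' T ⊆ Set.Ico x (x + δ * Real.exp (-x)) := by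
          rintro y ⟨_, hy1, hy2⟩
          exact ⟨hy1, hy2⟩
        refine le_trans (measure_mono hsub) ?_
        rw [hμ, Measure.smul_apply, smul_eq_mul]
        refine mul_le_mul_right ?_ _
        refine le_trans (Measure.restrict_le_self _) ?_
        rw [Real.volume_Ico]
        simp
      · rw [Set.indicator_of_notMem (by simpa using hx)]
        have : Prod.mk x ⁻¹' T = ∅ := by
          ext y; simp only [Set.mem_preimage, hT, Set.mem_setOf_eq, Set.mem_empty_iff_false,
            iff_false]
          intro hc; exact hx hc.1
        simp [this]
    refine le_trans (lintegral_mono hinner) ?_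
    rw [hμ, lintegral_smul_measure]
    have hres : ∫⁻ x, Set.indicator (Set.Ici L0)
          (fun x => (ENNReal.ofReal L)⁻¹ * ENNReal.ofReal (δ * Real.exp (-x))) x
          ∂(volume.restrict (Set.Icc 0 L))
        ≤ ∫⁻ x, Set.indicator (Set.Ici L0)
          (fun x => (ENNReal.ofReal L)⁻¹ * ENNReal.ofReal (δ * Real.exp (-x))) x ∂volume :=
      lintegral_mono' Measure.restrict_le_self le_rfl
    refine le_trans (mul_le_mul_right hres _) ?_
    rw [lintegral_indicator measurableSet_Ici _]
    have hconst : ∫⁻ x in Set.Ici L0,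
          (ENNReal.ofReal L)⁻¹ * ENNReal.ofReal (δ * Real.exp (-x)) ∂volume
        = (ENNReal.ofReal L)⁻¹ * ∫⁻ x in Set.Ici L0, ENNReal.ofReal (δ * Real.exp (-x)) ∂volume :=
      lintegral_const_mul _ (ENNReal.measurable_ofReal.comp
        ((Real.measurable_exp.comp measurable_neg).const_mul δ))
    rw [hconst]
    have hint : ∫⁻ x in Set.Ici L0, ENNReal.ofReal (δ * Real.exp (-x)) ∂volume
        = ENNReal.ofReal (δ * Real.exp (-L0)) := by
      have hInt : IntegrableOn (fun x : ℝ => δ * Real.exp (-x)) (Set.Ici L0) := by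
        rw [integrableOn_Ici_iff_integrableOn_Ioi]
        have := (exp_neg_integrableOn_Ioi L0 (one_pos)).const_mul δ
        simpa [IntegrableOn] using this
      rw [← ofReal_integral_eq_lintegral_ofReal hInt
        (Filter.Eventually.of_forall fun x => by positivity)]
      congr 1
      rw [MeasureTheory.integral_Ici_eq_integral_Ioi, MeasureTheory.integral_const_mul]
      simp [integral_exp_neg_Ioi, integral_exp_Iic]
    rw [hint]
    rw [← ENNReal.ofReal_inv_of_pos hLpos]
    rw [← ENNReal.ofReal_mul (by positivity), ← ENNReal.ofReal_mul (by positivity)]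
  refine le_trans (Finset.sum_le_sum hpair) ?_
  rw [Finset.sum_const, Finset.offDiag_card, Finset.card_univ, Fintype.card_fin]
  rw [nsmul_eq_mul]
  have hcast : ((n * n - n : ℕ) : ENNReal) = ENNReal.ofReal ((n * n - n : ℕ) : ℝ) := by
    simp [ENNReal.ofReal_natCast]
  rw [hcast, ← ENNReal.ofReal_mul (by positivity)]
  apply ENNReal.ofReal_le_ofReal
  have hnn : (n : ℕ) ≤ n * n := Nat.le_mul_of_pos_left n hn
  have : ((n * n - n : ℕ) : ℝ) = (n : ℝ) * ((n : ℝ) - 1) := by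
    push_cast [Nat.cast_sub hnn]
    ring
  rw [this, div_eq_mul_inv, sq, mul_inv]
  exact le_of_eq (by ring)
end
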